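/- Suppose P(x) = ((⋯(x^2 - c_1)^2 ⋯)^2 - c_k ∈ ℤ[x] splits into linear factors over ℤ. Then every element of every tail square set T_j with j ≥ 2 is the square of an even integer; equivalently, every t with t² ∈ T_j (j ≥ 2) is even. -/
import Mathlib


open Polynomial

noncomputable def chain (c : ℕ → ℤ) : ℕ → Polynomial ℤ
  | 0 => X
  | j + 1 => (chain c j) ^ 2 - C (c (j + 1))

def Crumbles (P : Polynomial ℤ) : Prop :=
  ∃ s : Multiset (Polynomial ℤ), (∀ q ∈ s, q.degree = 1) ∧ P = s.prod

/-- Auxiliary downward recursion for tail square sets with `T_{k+1} = {0}`: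
`tailAux c k d` is `T_{k+1-d}`. -/
def tailAux (c : ℕ → ℤ) (k : ℕ) : ℕ → Set ℤ
  | 0 => {0}
  | d + 1 => {x | ∃ t, t ^ 2 ∈ tailAux c k d ∧
      (x = c (k + 1 - (d + 1)) + t ∨ x = c (k + 1 - (d + 1)) - t)}

/-- The tail square set `T_j` (for `1 ≤ j ≤ k + 1`) of a square chain of length `k`. -/
def tailSet (c : ℕ → ℤ) (k j : ℕ) : Set ℤ := tailAux c k (k + 1 - j)

lemma chain_monic_natDegree (c : ℕ → ℤ) : ∀ k, (chain c k).Monic ∧ (chain c k).natDegree = 2 ^ k := by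
  intro k
  induction k with
  | zero => exact ⟨monic_X, natDegree_X⟩
  | succ n ih =>
    obtain ⟨hm, hd⟩ := ih
    have hm2 : ((chain c n) ^ 2).Monic := hm.pow 2
    have hd2 : ((chain c n) ^ 2).natDegree = 2 ^ (n + 1) := by
      rw [natDegree_pow, hd]; ring
    have hpos : 0 < ((chain c n) ^ 2).degree := by
      rw [natDegree_pos_iff_degree_pos.symm, hd2]; positivity
    have hlt : (C (c (n + 1))).degree < ((chain c n) ^ 2).degree :=
      lt_of_le_of_lt degree_C_le hpos
    have hch : chain c (n + 1) = (chain c n) ^ 2 - C (c (n + 1)) := rfl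
    refine ⟨?_, ?_⟩
    · rw [hch]; exact hm2.sub_of_left hlt
    · rw [hch, natDegree_sub_C, hd2]

lemma chain_root_int (k : ℕ) (c : ℕ → ℤ) (hcr : Crumbles (chain c k)) (z : ℂ)
    (hz : ((chain c k).map (Int.castRingHom ℂ)).eval z = 0) : ∃ r : ℤ, z = (r : ℂ) := by
  obtain ⟨s, hdeg, hprod⟩ := hcr
  rw [hprod, Polynomial.map_multiset_prod, eval_multiset_prod] at hz
  rw [Multiset.prod_eq_zero_iff] at hz
  obtain ⟨y, hy, hy0⟩ := Multiset.mem_map.mp hz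
  obtain ⟨q, hq, rfl⟩ := Multiset.mem_map.mp hy
  have hq1 : q.degree = 1 := hdeg q hq
  have hqn : q.natDegree = 1 := natDegree_eq_of_degree_eq_some hq1
  -- leading coefficient of q is a unit
  have hlc : q.leadingCoeff ∣ 1 := by
    have h1 : (s.map fun f => leadingCoeff f).prod = 1 := by
      rw [← leadingCoeff_multiset_prod, ← hprod]
      exact (chain_monic_natDegree c k).1
    rw [← h1]
    exact Multiset.dvd_prod (Multiset.mem_map_of_mem _ hq)
  have ha : q.coeff 1 = 1 ∨ q.coeff 1 = -1 := by
    have := Int.isUnit_iff.mp (isUnit_of_dvd_one hlc)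
    rwa [leadingCoeff, hqn] at this
  have hqe : q = C (q.coeff 1) * X + C (q.coeff 0) :=
    eq_X_add_C_of_degree_le_one (by rw [hq1])
  rw [hqe] at hy0
  simp only [Polynomial.map_add, Polynomial.map_mul, Polynomial.map_C, Polynomial.map_X,
    Polynomial.map_intCast, Polynomial.eval_intCast,
    eval_add, eval_mul, eval_C, eval_X, eq_intCast] at hy0
  rcases ha with h | h <;> rw [h] at hy0
  · exact ⟨-q.coeff 0, by push_cast at hy0 ⊢; linear_combination hy0⟩
  · exact ⟨q.coeff 0, by push_cast at hy0 ⊢; linear_combination -hy0⟩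

lemma chain_down (c : ℕ → ℤ) (k : ℕ) : ∀ d, d ≤ k → ∀ u : ℤ, u ∈ tailAux c k d → ∀ z : ℂ,
    (((chain c (k - d)).map (Int.castRingHom ℂ)).eval z) ^ 2 = (u : ℂ) →
    ((chain c k).map (Int.castRingHom ℂ)).eval z = 0 := by
  intro d
  induction d with
  | zero =>
    intro _ u hu z hz
    have hu0 : u = 0 := by simpa [tailAux] using hu
    subst hu0
    have h0 : (((chain c (k - 0)).map (Int.castRingHom ℂ)).eval z) ^ 2 = 0 := by simpa using hz
    have := (pow_eq_zero_iff (two_ne_zero)).mp h0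
    simpa using this
  | succ d ih =>
    intro hdk u hu z hz
    obtain ⟨t, ht, hu'⟩ := hu
    set m := k - (d + 1) with hmdef
    have hm : k - d = m + 1 := by omega
    have hidx : k + 1 - (d + 1) = m + 1 := by omega
    rw [hidx] at hu'
    have hch : chain c (k - d) = (chain c m) ^ 2 - C (c (m + 1)) := by rw [hm]; rfl
    have e1 : ((chain c (k - d)).map (Int.castRingHom ℂ)).eval z = (u : ℂ) - (c (m + 1) : ℂ) := by
      rw [hch]
      simp only [Polynomial.map_sub, Polynomial.map_pow, Polynomial.map_C, eval_sub, eval_pow,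
        Polynomial.map_intCast, Polynomial.eval_intCast, eval_C, eq_intCast]
      rw [hz]
    refine ih (by omega) (t ^ 2) ht z ?_
    rw [e1]
    rcases hu' with h | h <;> subst h <;> push_cast <;> ring

lemma tail_sq (k : ℕ) (c : ℕ → ℤ) (hcr : Crumbles (chain c k)) :
    ∀ d, d ≤ k → ∀ u ∈ tailAux c k d, ∃ a : ℤ, u = a ^ 2 := by
  intro d hd u hu
  obtain ⟨sq, hsq⟩ := IsAlgClosed.exists_pow_nat_eq (k := ℂ) (u : ℂ) (n := 2) (by norm_num)
  -- the polynomial chain c (k-d) - sq has a complex root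
  set p : Polynomial ℂ := (chain c (k - d)).map (Int.castRingHom ℂ) with hp
  have hmon := (chain_monic_natDegree c (k - d)).1
  have hpos : 0 < p.degree := by
    refine natDegree_pos_iff_degree_pos.mp ?_
    rw [hp, hmon.natDegree_map, (chain_monic_natDegree c (k - d)).2]
    positivity
  have hne : (p - C sq).degree ≠ 0 := by
    rw [degree_sub_C hpos]
    exact ne_of_gt hpos
  obtain ⟨z, hz⟩ := IsAlgClosed.exists_root (p - C sq) hne
  have hzz : p.eval z = sq := by
    have h := hz
    rw [IsRoot.def, eval_sub, eval_C, sub_eq_zero] at h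
    exact h
  have hroot : ((chain c k).map (Int.castRingHom ℂ)).eval z = 0 := by
    refine chain_down c k d hd u hu z ?_
    rw [← hp, hzz, hsq]
  obtain ⟨r, rfl⟩ := chain_root_int k c hcr z hroot
  refine ⟨(chain c (k - d)).eval r, ?_⟩
  have : p.eval (r : ℂ) = (((chain c (k - d)).eval r : ℤ) : ℂ) := by
    rw [hp, eval_intCast_map]; simp
  have h2 : ((u : ℤ) : ℂ) = (((chain c (k - d)).eval r : ℤ) : ℂ) ^ 2 := by
    rw [← hsq, ← hzz, this]
  exact_mod_cast h2

theorem stmt_19 (k : ℕ) (c : ℕ → ℤ) (hcr : Crumbles (chain c k)) :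
    ∀ j t, 2 ≤ j → j ≤ k + 1 → t ^ 2 ∈ tailSet c k j → Even t := by
  intro j t hj2 hjk ht
  have hd : k + 2 - j = (k + 1 - j) + 1 := by omega
  have hidx : k + 1 - ((k + 1 - j) + 1) = j - 1 := by omega
  have hplus : c (j - 1) + t ∈ tailAux c k ((k + 1 - j) + 1) := by
    exact ⟨t, ht, by rw [hidx]; left; rfl⟩
  have hminus : c (j - 1) - t ∈ tailAux c k ((k + 1 - j) + 1) := by
    exact ⟨t, ht, by rw [hidx]; right; rfl⟩
  have hle : (k + 1 - j) + 1 ≤ k := by omega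
  obtain ⟨a, ha⟩ := tail_sq k c hcr _ hle _ hplus
  obtain ⟨b, hb⟩ := tail_sq k c hcr _ hle _ hminus
  have h2t : a ^ 2 - b ^ 2 = 2 * t := by linear_combination hb - ha
  have hev2 : Even (a ^ 2 - b ^ 2) := ⟨t, by linarith⟩
  have hevab : Even a ↔ Even b := by
    have h := Int.even_sub.mp hev2
    simpa [Int.even_pow] using h
  obtain ⟨u, hu⟩ := Int.even_sub.mpr hevab
  obtain ⟨v, hv⟩ := Int.even_add.mpr hevab
  have key : 2 * t = 2 * (u * v + u * v) := by
    linear_combination -h2t + (a + b) * hu + (u + u) * hv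
  exact ⟨u * v, mul_left_cancel₀ two_ne_zero key⟩
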